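/- Let G be a simple graph on vertex set {1,…,n}, let A ∈ S(G), and let x be a nonzero vector with Ax = 0. Then the support of x (the set of indices i with x_i ≠ 0) is a fort of G. -/
import Mathlib


open Matrix
open scoped Classical

/-- `A ∈ S(G)`: real symmetric matrices whose off-diagonal zero/nonzero pattern
is given by the adjacencies of `G`. -/
def SMatrixOf {V : Type*} [Fintype V] (G : SimpleGraph V) (A : Matrix V V ℝ) : Prop :=
  A.IsSymm ∧ ∀ i j, i ≠ j → (A i j ≠ 0 ↔ G.Adj i j)

/-- A fort of `G`: a nonempty vertex set `F` such that no vertex outside `F`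
is adjacent to exactly one vertex of `F`. -/
def IsFort {V : Type*} (G : SimpleGraph V) (F : Set V) : Prop :=
  F.Nonempty ∧ ∀ v ∉ F, ¬ ∃! w, w ∈ F ∧ G.Adj v w

/-- The spark of a square real matrix: the minimum number of nonzero coordinates
of a nonzero null vector; `card + 1` if the matrix is nonsingular. -/
noncomputable def Matrix.spark {V : Type*} [Fintype V] (A : Matrix V V ℝ) : ℕ :=
  if ∃ x : V → ℝ, x ≠ 0 ∧ A.mulVec x = 0 then
    sInf {k | ∃ x : V → ℝ, x ≠ 0 ∧ A.mulVec x = 0 ∧ {i | x i ≠ 0}.ncard = k}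
  else Fintype.card V + 1

/-- The spark of a graph. -/
noncomputable def sparkG {V : Type*} [Fintype V] (G : SimpleGraph V) : ℕ :=
  sInf {s | ∃ A, SMatrixOf G A ∧ A.spark = s}

/-- minimum degree -/
noncomputable def minDeg {V : Type*} (G : SimpleGraph V) : ℕ :=
  sInf {d | ∃ v, (G.neighborSet v).ncard = d}

/-- `G` is `k`-connected: more than `k` vertices, and removing fewer than `k`
vertices leaves a connected graph. -/
def IsKConnected {V : Type*} [Fintype V] (G : SimpleGraph V) (k : ℕ) : Prop :=
  k < Fintype.card V ∧ ∀ S : Set V, S.ncard < k → (G.induce Sᶜ).Connected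

/-- vertex connectivity -/
noncomputable def kappa {V : Type*} [Fintype V] (G : SimpleGraph V) : ℕ :=
  sSup {k | IsKConnected G k}

/-- minimum rank of a graph -/
noncomputable def mr {V : Type*} [Fintype V] (G : SimpleGraph V) : ℕ :=
  sInf {r | ∃ A, SMatrixOf G A ∧ A.rank = r}

/-- minimum semidefinite rank of a graph -/
noncomputable def mrPlus {V : Type*} [Fintype V] (G : SimpleGraph V) : ℕ :=
  sInf {r | ∃ A, SMatrixOf G A ∧ A.PosSemidef ∧ A.rank = r}

/-- nullity of a square matrix -/
noncomputable def nullity {V : Type*} [Fintype V] (A : Matrix V V ℝ) : ℕ :=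
  Module.finrank ℝ (LinearMap.ker A.mulVecLin)

/-- A matrix is generic if every square submatrix is nonsingular. -/
def IsGeneric {m p : Type*} (X : Matrix m p ℝ) : Prop :=
  ∀ (r : ℕ) (f : Fin r → m) (g : Fin r → p),
    Function.Injective f → Function.Injective g → (X.submatrix f g).det ≠ 0

/-- generic nullity of a matrix -/
noncomputable def GN {n : ℕ} (A : Matrix (Fin n) (Fin n) ℝ) : ℕ :=
  sSup {k | ∃ X : Matrix (Fin n) (Fin k) ℝ, IsGeneric X ∧ A * X = 0}

/-- maximum generic nullity of a graph -/
noncomputable def GM {n : ℕ} (G : SimpleGraph (Fin n)) : ℕ :=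
  sSup {m | ∃ A, SMatrixOf G A ∧ GN A = m}

/-- the support of a nonzero null vector of `A ∈ S(G)` is a fort of `G`. -/
theorem stmt0 {n : ℕ} (G : SimpleGraph (Fin n)) (A : Matrix (Fin n) (Fin n) ℝ)
    (hA : SMatrixOf G A) (x : Fin n → ℝ) (hx : x ≠ 0) (hAx : A.mulVec x = 0) :
    IsFort G {i | x i ≠ 0} := by
  constructor
  · rcases Function.ne_iff.mp hx with ⟨i, hi⟩
    exact ⟨i, hi⟩
  · rintro v hv ⟨w, ⟨hwF, hadj⟩, huniq⟩
    have hvz : x v = 0 := by simpa using not_not.mp hv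
    have hsum : ∑ j, A v j * x j = 0 := congrFun hAx v
    have hsum' : ∑ j, A v j * x j = A v w * x w := by
      refine Finset.sum_eq_single w (fun j _ hj => ?_) (by simp)
      by_cases hxj : x j = 0
      · simp [hxj]
      by_cases hvj : v = j
      · simp [← hvj, hvz]
      by_cases hAvj : A v j = 0
      · simp [hAvj]
      · exact absurd (huniq j ⟨hxj, (hA.2 v j hvj).mp hAvj⟩) hj
    rw [hsum'] at hsum
    have hAvw : A v w ≠ 0 := (hA.2 v w (G.ne_of_adj hadj)).mpr hadj
    exact hwF ((mul_eq_zero.mp hsum).resolve_left hAvw)
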